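/- Suppose (X, h) is an almost representable polymatroid and 0 ≤ ε ≤ h(X). Then the ε-perturbation g, defined by g(A) := min(h(A), h(X) − ε) for all A ⊆ X, is almost representable. -/

import Mathlib

open Module Filter Topology

/-- A representation of a rank function on ground set `X` by subspaces of a
finite-dimensional vector space `W` over a finite field `F`. -/
structure SubspaceRep {X : Type} (h : Finset X → ℝ) where
  F : Type
  W : Type
  [fieldF : Field F]
  [fintypeF : Fintype F]
  [addCommGroupW : AddCommGroup W]
  [moduleW : Module F W]
  [finiteDimensionalW : FiniteDimensional F W]
  V : X → Submodule F W
  rank_eq : ∀ A : Finset X, h A = (Module.finrank F ↥(A.sup V) : ℝ)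

/-- `h` is representable: it is `q`-representable for some prime power `q`
(equivalently, it is given by subspace dimensions over some finite field). -/
def IsRepresentable {X : Type} (h : Finset X → ℝ) : Prop := Nonempty (SubspaceRep h)

/-- `h` is even representable: `2^m`-representable for some positive integer `m`. -/
def EvenRepresentable {X : Type} (h : Finset X → ℝ) : Prop :=
  ∃ (r : SubspaceRep h) (m : ℕ), 0 < m ∧ Nat.card r.F = 2 ^ m

/-- `h` is odd representable: `p^m`-representable for some odd prime `p` and positive `m`. -/
def OddRepresentable {X : Type} (h : Finset X → ℝ) : Prop :=
  ∃ (r : SubspaceRep h) (p m : ℕ), p.Prime ∧ Odd p ∧ 0 < m ∧ Nat.card r.F = p ^ m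

/-- Polymatroid axioms: normalization, nonnegativity, monotonicity, submodularity. -/
def IsPolymatroid {X : Type} [DecidableEq X] (h : Finset X → ℝ) : Prop :=
  h ∅ = 0 ∧ (∀ A, 0 ≤ h A) ∧ (∀ A B : Finset X, A ⊆ B → h A ≤ h B) ∧
    ∀ A B : Finset X, h (A ∪ B) + h (A ∩ B) ≤ h A + h B

/-- The Ingleton expression `J_h(A1,A2,A3,A4)`. -/
noncomputable def ingletonJ {X : Type} [DecidableEq X] (h : Finset X → ℝ)
    (A1 A2 A3 A4 : Finset X) : ℝ :=
  h (A1 ∪ A2) + h (A1 ∪ A3) + h (A1 ∪ A4) + h (A2 ∪ A3) + h (A2 ∪ A4)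
    - h A1 - h A2 - h (A3 ∪ A4) - h (A1 ∪ A2 ∪ A3) - h (A1 ∪ A2 ∪ A4)

/-- `h` is Ingletonian if all Ingleton expressions are nonnegative. -/
def IsIngletonian {X : Type} [DecidableEq X] (h : Finset X → ℝ) : Prop :=
  ∀ A1 A2 A3 A4 : Finset X, 0 ≤ ingletonJ h A1 A2 A3 A4

/-- The convex cone generated by a set `S` of rank functions (viewed as points of
`ℝ^{2^|X|}`): all finite nonnegative combinations of elements of `S`. -/
def coneHull {X : Type} (S : Set (Finset X → ℝ)) : Set (Finset X → ℝ) :=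
  {x | ∃ (m : ℕ) (c : Fin m → ℝ) (f : Fin m → Finset X → ℝ),
    (∀ i, 0 ≤ c i) ∧ (∀ i, f i ∈ S) ∧ x = ∑ i, c i • f i}

/-- `h` is almost representable: a coordinatewise limit `h = lim_i c_i g_i` with
`c_i > 0` and each `g_i` representable. -/
def AlmostRepresentable {X : Type} (h : Finset X → ℝ) : Prop :=
  ∃ (g : ℕ → Finset X → ℝ) (c : ℕ → ℝ), (∀ i, IsRepresentable (g i)) ∧
    (∀ i, 0 < c i) ∧ ∀ A : Finset X, Tendsto (fun i => c i * g i A) atTop (𝓝 (h A))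

/-- `h` is almost even representable. -/
def AlmostEvenRepresentable {X : Type} (h : Finset X → ℝ) : Prop :=
  ∃ (g : ℕ → Finset X → ℝ) (c : ℕ → ℝ), (∀ i, EvenRepresentable (g i)) ∧
    (∀ i, 0 < c i) ∧ ∀ A : Finset X, Tendsto (fun i => c i * g i A) atTop (𝓝 (h A))

/-- `h` is almost odd representable. -/
def AlmostOddRepresentable {X : Type} (h : Finset X → ℝ) : Prop :=
  ∃ (g : ℕ → Finset X → ℝ) (c : ℕ → ℝ), (∀ i, OddRepresentable (g i)) ∧
    (∀ i, 0 < c i) ∧ ∀ A : Finset X, Tendsto (fun i => c i * g i A) atTop (𝓝 (h A))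

/-- `h` is cc-representable: it lies in the closure of the convex cone generated by
the set `Υ[X]` of representable rank functions on `X`. -/
def CcRepresentable {X : Type} (h : Finset X → ℝ) : Prop :=
  h ∈ closure (coneHull {g : Finset X → ℝ | IsRepresentable g})

/-- A matroid: an integer-valued polymatroid with `h(A) ≤ |A|`. -/
def IsIntMatroid {X : Type} [DecidableEq X] (h : Finset X → ℝ) : Prop :=
  IsPolymatroid h ∧ (∀ A : Finset X, ∃ z : ℤ, h A = (z : ℝ)) ∧ ∀ A : Finset X, h A ≤ A.card

/-- A circuit of a matroid: a minimal dependent set. -/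
def IsCircuit {X : Type} (h : Finset X → ℝ) (C : Finset X) : Prop :=
  h C < C.card ∧ ∀ D : Finset X, D ⊂ C → h D = D.card

/-- A connected matroid: every pair of distinct elements lies in a common circuit. -/
def IsConnectedMatroid {X : Type} [DecidableEq X] (h : Finset X → ℝ) : Prop :=
  IsIntMatroid h ∧ ∀ x y : X, x ≠ y → ∃ C : Finset X, IsCircuit h C ∧ x ∈ C ∧ y ∈ C

namespace PertAux

variable {F W W2 : Type*} [Field F] [AddCommGroup W] [Module F W]
  [AddCommGroup W2] [Module F W2]

lemma sup_map_eq {X : Type*} [DecidableEq X] (f : W →ₗ[F] W2) (V : X → Submodule F W)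
    (A : Finset X) : A.sup (fun i => (V i).map f) = (A.sup V).map f := by
  induction A using Finset.induction_on with
  | empty => simp
  | insert _ _ h ih => simp [Finset.sup_insert, ih, Submodule.map_sup]

lemma finrank_map_mkQ_add [FiniteDimensional F W] (U p : Submodule F W) :
    finrank F (p.map U.mkQ) + finrank F ↥(p ⊓ U) = finrank F ↥p := by
  have h := (U.mkQ.comp p.subtype).finrank_range_add_finrank_ker
  rw [LinearMap.range_comp, Submodule.range_subtype, LinearMap.ker_comp,
    Submodule.ker_mkQ] at h
  rwa [LinearEquiv.finrank_eq (Submodule.equivMapOfInjective p.subtype p.injective_subtype _),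
    Submodule.map_comap_subtype] at h

lemma prod_sup_prod (p p' : Submodule F W) (q q' : Submodule F W2) :
    (p.prod q) ⊔ (p'.prod q') = (p ⊔ p').prod (q ⊔ q') := by
  apply le_antisymm
  · exact sup_le (Submodule.prod_mono le_sup_left le_sup_left)
      (Submodule.prod_mono le_sup_right le_sup_right)
  · rintro ⟨x, y⟩ ⟨hx, hy⟩
    obtain ⟨a, ha, a', ha', rfl⟩ := Submodule.mem_sup.mp hx
    obtain ⟨b, hb, b', hb', rfl⟩ := Submodule.mem_sup.mp hy
    have : ((a + a', b + b') : W × W2) = (a, b) + (a', b') := by simp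
    rw [this]
    exact Submodule.add_mem _ (Submodule.mem_sup_left ⟨ha, hb⟩)
      (Submodule.mem_sup_right ⟨ha', hb'⟩)

lemma finrank_prod_submodule [FiniteDimensional F W] [FiniteDimensional F W2]
    (p : Submodule F W) (q : Submodule F W2) :
    finrank F ↥(p.prod q) = finrank F ↥p + finrank F ↥q := by
  rw [LinearMap.prod_eq_sup_map]
  have h1 : finrank F ↥(p.map (LinearMap.inl F W W2)) = finrank F ↥p :=
    (LinearEquiv.finrank_eq (Submodule.equivMapOfInjective _ LinearMap.inl_injective p)).symm
  have h2 : finrank F ↥(q.map (LinearMap.inr F W W2)) = finrank F ↥q :=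
    (LinearEquiv.finrank_eq (Submodule.equivMapOfInjective _ LinearMap.inr_injective q)).symm
  have hinf : (p.map (LinearMap.inl F W W2)) ⊓ (q.map (LinearMap.inr F W W2)) = ⊥ := by
    rw [eq_bot_iff]
    rintro ⟨x, y⟩ ⟨⟨a, _, ha⟩, ⟨b, _, hb⟩⟩
    simp only [LinearMap.coe_inl, LinearMap.coe_inr, Prod.mk.injEq] at ha hb
    simp only [Submodule.mem_bot, Prod.mk_eq_zero]
    exact ⟨hb.1.symm, ha.2.symm⟩
  have := Submodule.finrank_sup_add_finrank_inf_eq (p.map (LinearMap.inl F W W2))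
    (q.map (LinearMap.inr F W W2))
  rw [hinf, finrank_bot, add_zero, h1, h2] at this
  exact this


lemma finrank_sup_span_singleton [FiniteDimensional F W] (p : Submodule F W) {u : W}
    (hu : u ∉ p) : finrank F ↥(p ⊔ (F ∙ u)) = finrank F ↥p + 1 := by
  have hu0 : u ≠ 0 := fun h => hu (h ▸ p.zero_mem)
  have hinf : p ⊓ (F ∙ u) = ⊥ := by
    rw [eq_bot_iff]
    rintro x ⟨hxp, hxs⟩
    obtain ⟨a, rfl⟩ := Submodule.mem_span_singleton.mp hxs
    rcases eq_or_ne a 0 with rfl | ha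
    · simp
    · exact absurd (by simpa [smul_smul, inv_mul_cancel₀ ha] using p.smul_mem a⁻¹ hxp) hu
  have h := Submodule.finrank_sup_add_finrank_inf_eq p (F ∙ u)
  rw [hinf, finrank_bot, add_zero, finrank_span_singleton hu0] at h
  exact h

lemma exists_notin_union {ι : Type*} [Fintype ι] [Fintype F] [FiniteDimensional F W]
    (S : Submodule F W) (T : ι → Submodule F W) (hT : ∀ i, T i < S)
    (hcard : Fintype.card ι < Fintype.card F) :
    ∃ u ∈ S, ∀ i, u ∉ T i := by
  rcases isEmpty_or_nonempty ι with hι | hι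
  · exact ⟨0, S.zero_mem, fun i => isEmptyElim i⟩
  letI : Finite W := Module.finite_of_finite F
  letI : Fintype W := Fintype.ofFinite W
  letI : DecidableEq W := Classical.decEq W
  letI : ∀ s : Set W, Fintype ↥s := fun s => Fintype.ofFinite _
  letI : ∀ p : Submodule F W, Fintype ↥p := fun p => Fintype.ofFinite _
  by_contra hcon
  push_neg at hcon
  set q := Fintype.card F with hq
  have hq1 : 1 < q := Fintype.one_lt_card
  set n₀ := finrank F ↥S with hn₀
  have hTrank : ∀ i, finrank F ↥(T i) < n₀ := fun i =>
    Submodule.finrank_lt_finrank_of_lt (hT i)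
  have hn₀pos : 0 < n₀ := lt_of_le_of_lt (Nat.zero_le _) (hTrank hι.some)
  have hTcard : ∀ i, ((T i : Set W).toFinset.card) ≤ q ^ (n₀ - 1) := by
    intro i
    rw [Set.toFinset_card]
    calc Fintype.card ↥(T i) = q ^ finrank F ↥(T i) := card_eq_pow_finrank
      _ ≤ q ^ (n₀ - 1) := Nat.pow_le_pow_right (le_of_lt hq1) (by have := hTrank i; omega)
  have hsub : (S : Set W).toFinset ⊆ Finset.univ.biUnion (fun i => (T i : Set W).toFinset) := by
    intro x hx
    rw [Set.mem_toFinset] at hx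
    obtain ⟨i, hi⟩ := hcon x hx
    exact Finset.mem_biUnion.mpr ⟨i, Finset.mem_univ i, Set.mem_toFinset.mpr hi⟩
  have hchain : q ^ n₀ < q ^ n₀ := by
    calc q ^ n₀ = Fintype.card ↥S := card_eq_pow_finrank.symm
      _ = (S : Set W).toFinset.card := (Set.toFinset_card _).symm
      _ ≤ (Finset.univ.biUnion (fun i => (T i : Set W).toFinset)).card :=
          Finset.card_le_card hsub
      _ ≤ ∑ i, ((T i : Set W).toFinset.card) := Finset.card_biUnion_le
      _ ≤ Fintype.card ι * q ^ (n₀ - 1) := by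
          simpa using Finset.sum_le_card_nsmul Finset.univ _ _ (fun i _ => hTcard i)
      _ < q * q ^ (n₀ - 1) :=
          (Nat.mul_lt_mul_right (Nat.pow_pos (lt_trans Nat.zero_lt_one hq1))).mpr hcard
      _ = q ^ n₀ := by
          rw [← pow_succ']
          congr 1
          omega
  exact lt_irrefl _ hchain


lemma exists_generic {X : Type} [Fintype X] [DecidableEq X] [Fintype F]
    [FiniteDimensional F W] (V : X → Submodule F W)
    (hF : Fintype.card (Finset X) < Fintype.card F) :
    ∀ t : ℕ, t ≤ finrank F ↥(Finset.univ.sup V) →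
    ∃ U : Submodule F W, U ≤ Finset.univ.sup V ∧ finrank F ↥U = t ∧
      ∀ A : Finset X, finrank F ↥(A.sup V ⊔ U) =
        min (finrank F ↥(A.sup V) + t) (finrank F ↥(Finset.univ.sup V)) := by
  set S := Finset.univ.sup V with hS
  set n₀ := finrank F ↥S with hn₀
  intro t
  induction t with
  | zero =>
    intro _
    refine ⟨⊥, bot_le, finrank_bot F W, fun A => ?_⟩
    rw [sup_bot_eq, add_zero]
    exact (min_eq_left (Submodule.finrank_mono (Finset.sup_mono (Finset.subset_univ A)))).symm
  | succ t ih =>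
    intro ht
    obtain ⟨U, hUS, hUrank, hA⟩ := ih (Nat.le_of_succ_le ht)
    letI : DecidablePred (fun A : Finset X => A.sup V ⊔ U < S) := Classical.decPred _
    have hcard : Fintype.card {A : Finset X // A.sup V ⊔ U < S} < Fintype.card F :=
      lt_of_le_of_lt (Fintype.card_subtype_le _) hF
    obtain ⟨u, huS, hu⟩ := exists_notin_union S (fun i => i.1.sup V ⊔ U)
      (fun i => i.2) hcard
    have hUltS : U < S := by
      refine lt_of_le_of_ne hUS (fun h => ?_)
      rw [h] at hUrank
      omega
    have huU : u ∉ U := by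
      have h' : (∅ : Finset X).sup V ⊔ U < S := by simpa using hUltS
      simpa using hu ⟨∅, h'⟩
    refine ⟨U ⊔ (F ∙ u), sup_le hUS ((Submodule.span_singleton_le_iff_mem u S).mpr huS),
      by rw [finrank_sup_span_singleton U huU, hUrank], fun A => ?_⟩
    rw [← sup_assoc]
    have hsub : A.sup V ⊔ U ≤ S := sup_le (Finset.sup_mono (Finset.subset_univ A)) hUS
    by_cases hlt : A.sup V ⊔ U < S
    · have hnotin : u ∉ A.sup V ⊔ U := hu ⟨A, hlt⟩
      rw [finrank_sup_span_singleton _ hnotin, hA A]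
      have h1 : finrank F ↥(A.sup V ⊔ U) < n₀ := Submodule.finrank_lt_finrank_of_lt hlt
      rw [hA A] at h1
      have h2 : finrank F ↥(A.sup V) + t < n₀ := by omega
      omega
    · have heq : A.sup V ⊔ U = S := by
        rcases lt_or_eq_of_le hsub with hcase | hcase
        · exact absurd hcase hlt
        · exact hcase
      have heq2 : A.sup V ⊔ U ⊔ (F ∙ u) = S := by
        rw [heq]
        exact sup_eq_left.mpr ((Submodule.span_singleton_le_iff_mem u S).mpr huS)
      rw [heq2]
      have h3 : n₀ ≤ finrank F ↥(A.sup V) + t := by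
        have := hA A
        rw [heq] at this
        omega
      omega

section BaseChangeLemmas

open TensorProduct

variable (F' : Type*) [Field F'] [Algebra F F']

lemma baseChange_sup (p q : Submodule F W) :
    (p ⊔ q).baseChange F' = p.baseChange F' ⊔ q.baseChange F' := by
  have h : (p ⊔ q : Submodule F W) = Submodule.span F ((p : Set W) ∪ (q : Set W)) := by
    rw [Submodule.span_union, Submodule.span_eq, Submodule.span_eq]
  rw [h, Submodule.baseChange_span, Set.image_union, Submodule.span_union]
  congr 1 <;> rw [← Submodule.baseChange_span, Submodule.span_eq]

lemma range_baseChange_subtype (p : Submodule F W) :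
    LinearMap.range (p.subtype.baseChange F') = p.baseChange F' := by
  apply le_antisymm
  · rintro x ⟨y, rfl⟩
    induction y using TensorProduct.induction_on with
    | zero => simp only [map_zero]; exact Submodule.zero_mem _
    | tmul a m =>
      rw [LinearMap.baseChange_tmul]
      exact Submodule.tmul_mem_baseChange_of_mem a m.2
    | add x y hx hy => rw [map_add]; exact Submodule.add_mem _ hx hy
  · rw [Submodule.baseChange_eq_span, Submodule.span_le]
    rintro - ⟨m, hm, rfl⟩
    exact ⟨(1 : F') ⊗ₜ[F] (⟨m, hm⟩ : p), by simp [TensorProduct.mk]⟩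

lemma finrank_baseChange_eq (p : Submodule F W) :
    finrank F' ↥(p.baseChange F') = finrank F ↥p := by
  have hinj : Function.Injective (p.subtype.baseChange F') := by
    rw [LinearMap.baseChange_eq_ltensor]
    exact Module.Flat.lTensor_preserves_injective_linearMap p.subtype p.injective_subtype
  have e : (F' ⊗[F] ↥p) ≃ₗ[F'] ↥(p.baseChange F') :=
    (LinearEquiv.ofInjective _ hinj).trans
      (LinearEquiv.ofEq _ _ (range_baseChange_subtype F' p))
  rw [← LinearEquiv.finrank_eq e, Module.finrank_baseChange]

lemma sup_baseChange {X : Type} [DecidableEq X] (V : X → Submodule F W) (A : Finset X) :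
    A.sup (fun i => (V i).baseChange F') = (A.sup V).baseChange F' := by
  induction A using Finset.induction_on with
  | empty => simp
  | insert _ _ h ih => rw [Finset.sup_insert, Finset.sup_insert, ih, baseChange_sup]

end BaseChangeLemmas

lemma exists_big_ext (F : Type) [Field F] [Fintype F] (N : ℕ) :
    ∃ (F' : Type) (_ : Field F') (_ : Algebra F F'),
      FiniteDimensional F F' ∧ Finite F' ∧ ∀ (inst : Fintype F'), N < Fintype.card F' := by
  classical
  obtain ⟨p, hp⟩ := CharP.exists F
  haveI := hp
  have hprime : p.Prime := CharP.char_is_prime F p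
  set q := Fintype.card F with hq
  have hq1 : 1 < q := Fintype.one_lt_card
  obtain ⟨n, -, hqpn⟩ := FiniteField.card F p
  set k := N + 1 with hk
  set poly : Polynomial F := Polynomial.X ^ q ^ k - Polynomial.X with hpoly
  refine ⟨poly.SplittingField, inferInstance, inferInstance, inferInstance,
    Module.finite_of_finite F, fun inst => ?_⟩
  have hpq : p ∣ q := by rw [hq, hqpn]; exact dvd_pow_self p n.2.ne'
  have hpdvd : p ∣ q ^ k := hpq.trans (dvd_pow_self q (by omega))
  have hsep : poly.Separable := galois_poly_separable p (q ^ k) hpdvd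
  have hsplit := Polynomial.SplittingField.splits poly
  have hcard := Polynomial.card_rootSet_eq_natDegree hsep hsplit
  have hdeg : poly.natDegree = q ^ k :=
    FiniteField.X_pow_card_pow_sub_X_natDegree_eq _ (by omega) hq1
  have hle : q ^ k ≤ Fintype.card poly.SplittingField := by
    rw [← hdeg, ← hcard]
    exact Fintype.card_le_of_injective _ Subtype.val_injective
  have hNk : N < q ^ k := by
    calc N < 2 ^ (N + 1) := by
            have := Nat.lt_two_pow_self (n := N)
            have h2 : (2:ℕ) ^ N ≤ 2 ^ (N + 1) := Nat.pow_le_pow_right (by norm_num) (by omega)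
            omega
      _ ≤ q ^ k := Nat.pow_le_pow_left hq1 k
  omega


section RepLemmas

lemma double_rep {X : Type} [DecidableEq X] {g : Finset X → ℝ} (hg : IsRepresentable g) :
    IsRepresentable (fun A => g A + g A) := by
  obtain ⟨r⟩ := hg
  letI := r.fieldF; letI := r.fintypeF; letI := r.addCommGroupW; letI := r.moduleW
  letI := r.finiteDimensionalW
  refine ⟨⟨r.F, r.W × r.W, fun i => (r.V i).prod (r.V i), fun A => ?_⟩⟩
  have hsup : A.sup (fun i => (r.V i).prod (r.V i)) = (A.sup r.V).prod (A.sup r.V) := by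
    induction A using Finset.induction_on with
    | empty =>
      simp only [Finset.sup_empty]
      ext ⟨x, y⟩
      simp [Submodule.mem_prod, Prod.ext_iff]
    | insert _ _ h ih => rw [Finset.sup_insert, Finset.sup_insert, ih, prod_sup_prod]
  rw [hsup, finrank_prod_submodule, r.rank_eq A]
  push_cast
  ring

lemma pow_two_rep {X : Type} [DecidableEq X] {g : Finset X → ℝ} (hg : IsRepresentable g)
    (s : ℕ) : IsRepresentable (fun A => 2 ^ s * g A) := by
  induction s with
  | zero => simpa using hg
  | succ s ih =>
    have h2 := double_rep ih
    have heq : (fun A : Finset X => 2 ^ (s + 1) * g A)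
        = fun A => 2 ^ s * g A + 2 ^ s * g A := by
      funext A
      ring
    rwa [heq]

lemma trunc_rep {X : Type} [Fintype X] [DecidableEq X] {g : Finset X → ℝ}
    (hg : IsRepresentable g) (t : ℕ) (ht : (t : ℝ) ≤ g Finset.univ) :
    IsRepresentable (fun A => min (g A) (g Finset.univ - t)) := by
  classical
  obtain ⟨r⟩ := hg
  letI := r.fieldF; letI := r.fintypeF; letI := r.addCommGroupW; letI := r.moduleW
  letI := r.finiteDimensionalW
  obtain ⟨F', instField, instAlg, hFD, hFin, hbig⟩ :=
    exists_big_ext r.F (Fintype.card (Finset X))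
  letI := instField
  letI := instAlg
  letI : Fintype F' := Fintype.ofFinite F'
  set W' := TensorProduct r.F F' r.W with hW'
  haveI : FiniteDimensional F' W' := inferInstance
  set V' : X → Submodule F' W' := fun i => (r.V i).baseChange F' with hV'
  have hdim : ∀ A : Finset X, finrank F' ↥(A.sup V') = finrank r.F ↥(A.sup r.V) := by
    intro A
    rw [hV']
    rw [sup_baseChange, finrank_baseChange_eq]
  set n₀ := finrank r.F ↥(Finset.univ.sup r.V) with hn₀
  have hguniv : g Finset.univ = (n₀ : ℝ) := r.rank_eq Finset.univ
  have htn : t ≤ n₀ := by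
    rw [hguniv] at ht
    exact_mod_cast ht
  have hF : Fintype.card (Finset X) < Fintype.card F' := hbig _
  obtain ⟨U, hUS, hUt, hA⟩ := exists_generic V' hF t (by rw [hdim]; exact htn)
  haveI : FiniteDimensional F' (W' ⧸ U) := inferInstance
  refine ⟨⟨F', W' ⧸ U, fun i => (V' i).map U.mkQ, fun A => ?_⟩⟩
  have key : finrank F' ↥(A.sup (fun i => (V' i).map U.mkQ))
      = min (finrank r.F ↥(A.sup r.V)) (n₀ - t) := by
    rw [sup_map_eq]
    have e1 := finrank_map_mkQ_add U (A.sup V')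
    have e2 := Submodule.finrank_sup_add_finrank_inf_eq (A.sup V') U
    have e3 := hA A
    have e4 : finrank F' ↥(A.sup V') = finrank r.F ↥(A.sup r.V) := hdim A
    have e5 : finrank F' ↥(Finset.univ.sup V') = n₀ := hdim Finset.univ
    have e6 : finrank r.F ↥(A.sup r.V) ≤ n₀ :=
      Submodule.finrank_mono (Finset.sup_mono (Finset.subset_univ A))
    rw [hUt] at e2
    rw [e5] at e3
    omega
  rw [key, r.rank_eq A, hguniv, Nat.cast_min, Nat.cast_sub htn]

end RepLemmas

end PertAux

/-- the ε-perturbation `g(A) := min(h(A), h(X) − ε)` of an almost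
representable polymatroid `(X, h)` with `0 ≤ ε ≤ h(X)` is almost representable. -/
theorem perturbation_of_almost_representable {X : Type} [Fintype X] [DecidableEq X]
    (h : Finset X → ℝ) (hpoly : IsPolymatroid h) (halmost : AlmostRepresentable h)
    (ε : ℝ) (hε0 : 0 ≤ ε) (hε1 : ε ≤ h Finset.univ) :
    AlmostRepresentable (fun A => min (h A) (h Finset.univ - ε)) := by
  classical
  obtain ⟨g, c, hrep, hc, hlim⟩ := halmost
  have hexists : ∀ i : ℕ, ∃ s : ℕ, ((i : ℝ) + 1) * c i < 2 ^ s := fun i =>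
    pow_unbounded_of_one_lt _ one_lt_two
  choose s hs using hexists
  set c' : ℕ → ℝ := fun i => c i / 2 ^ (s i) with hc'def
  set g' : ℕ → Finset X → ℝ := fun i A => 2 ^ (s i) * g i A with hg'def
  have h2pos : ∀ i, (0:ℝ) < 2 ^ (s i) := fun i => by positivity
  have hc'pos : ∀ i, 0 < c' i := fun i => div_pos (hc i) (h2pos i)
  have hc'lt : ∀ i, c' i < 1 / ((i : ℝ) + 1) := by
    intro i
    rw [div_lt_div_iff₀ (h2pos i) (by positivity)]
    calc c i * ((i:ℝ) + 1) = ((i:ℝ) + 1) * c i := by ring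
      _ < 2 ^ (s i) := hs i
      _ = 1 * 2 ^ (s i) := by ring
  have hc'0 : Filter.Tendsto c' Filter.atTop (nhds 0) := by
    apply squeeze_zero (fun i => (hc'pos i).le) (fun i => (hc'lt i).le)
    exact tendsto_one_div_add_atTop_nhds_zero_nat
  have hmul : ∀ i A, c' i * g' i A = c i * g i A := by
    intro i A
    have hd : (2:ℝ) ^ (s i) ≠ 0 := (h2pos i).ne'
    rw [hc'def, hg'def]
    field_simp
  have hgrep' : ∀ i, IsRepresentable (g' i) := fun i => PertAux.pow_two_rep (hrep i) (s i)
  have hnat : ∀ i, ∃ n : ℕ, g i Finset.univ = (n : ℝ) := by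
    intro i
    obtain ⟨r⟩ := hrep i
    exact ⟨_, r.rank_eq Finset.univ⟩
  choose n hn using hnat
  set N : ℕ → ℕ := fun i => 2 ^ (s i) * n i with hN
  have hg'univ : ∀ i, g' i Finset.univ = (N i : ℝ) := by
    intro i
    show (2:ℝ) ^ s i * g i Finset.univ = (N i : ℝ)
    rw [hn i, hN]
    push_cast
    ring
  set t : ℕ → ℕ := fun i => min (⌊ε / c' i⌋₊) (N i) with htdef
  have ht : ∀ i, ((t i : ℝ)) ≤ g' i Finset.univ := by
    intro i
    rw [hg'univ i]
    exact_mod_cast min_le_right _ _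
  have htrunc : ∀ i, IsRepresentable (fun A => min (g' i A) (g' i Finset.univ - t i)) :=
    fun i => PertAux.trunc_rep (hgrep' i) (t i) (ht i)
  refine ⟨fun i A => min (g' i A) (g' i Finset.univ - t i), c', htrunc, hc'pos, ?_⟩
  intro A
  have T1 : Filter.Tendsto (fun i => c' i * g' i A) Filter.atTop (nhds (h A)) :=
    Filter.Tendsto.congr (fun i => (hmul i A).symm) (hlim A)
  have T2 : Filter.Tendsto (fun i => c' i * g' i Finset.univ) Filter.atTop
      (nhds (h Finset.univ)) :=
    Filter.Tendsto.congr (fun i => (hmul i Finset.univ).symm) (hlim Finset.univ)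
  have Ta : Filter.Tendsto (fun i => c' i * (⌊ε / c' i⌋₊ : ℝ)) Filter.atTop (nhds ε) := by
    apply tendsto_of_tendsto_of_tendsto_of_le_of_le (g := fun i => ε - c' i)
      (h := fun _ => ε)
    · simpa using (tendsto_const_nhds (x := ε) (f := (Filter.atTop : Filter ℕ))).sub hc'0
    · exact tendsto_const_nhds
    · intro i
      have hfl := Nat.lt_floor_add_one (ε / c' i)
      rw [div_lt_iff₀ (hc'pos i)] at hfl
      nlinarith [hc'pos i]
    · intro i
      have hfl : (⌊ε / c' i⌋₊ : ℝ) ≤ ε / c' i := Nat.floor_le (div_nonneg hε0 (hc'pos i).le)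
      calc c' i * (⌊ε / c' i⌋₊ : ℝ) ≤ c' i * (ε / c' i) :=
            mul_le_mul_of_nonneg_left hfl (hc'pos i).le
        _ = ε := by rw [mul_comm]; exact div_mul_cancel₀ ε (hc'pos i).ne'
  have Tb : Filter.Tendsto (fun i => c' i * (N i : ℝ)) Filter.atTop
      (nhds (h Finset.univ)) :=
    Filter.Tendsto.congr (fun i => by rw [← hg'univ i]) T2
  have T3 : Filter.Tendsto (fun i => c' i * (t i : ℝ)) Filter.atTop (nhds ε) := by
    have hsplit : ∀ i, c' i * (t i : ℝ)
        = min (c' i * (⌊ε / c' i⌋₊ : ℝ)) (c' i * (N i : ℝ)) := by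
      intro i
      rw [htdef]
      push_cast
      rw [mul_min_of_nonneg _ _ (hc'pos i).le]
    have := (Ta.min Tb)
    rw [min_eq_left hε1] at this
    exact Filter.Tendsto.congr (fun i => (hsplit i).symm) this
  have heq : ∀ i, c' i * min (g' i A) (g' i Finset.univ - t i)
      = min (c' i * g' i A) (c' i * g' i Finset.univ - c' i * t i) := by
    intro i
    rw [mul_min_of_nonneg _ _ (hc'pos i).le, mul_sub]
  have Tfin := Filter.Tendsto.congr (fun i => (heq i).symm) (T1.min (T2.sub T3))
  simpa using Tfin
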